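/- (Sufficiency of species equivalence for ordinary lumpability.) Let R be a reaction network over a species type S and let ≈ be a species equivalence for R with multiset lifting ≈ₗ. Then ≈ₗ is an ordinarily lumpable partition of the continuous-time Markov chain of R on the full state space of multisets over S: for all states σ, σ' with σ ≈ₗ σ' and every state τ, q[σ, {θ | θ ≈ₗ τ}] = q[σ', {θ | θ ≈ₗ τ}]. -/

import Mathlib

open Classical

noncomputable section

/-- A reaction of a stochastic mass-action network:
reagent multiset, kinetic parameter, product multiset. -/
structure Reaction (S : Type*) where
  reag : Multiset S
  rate : ℝ
  prod : Multiset S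

variable {S : Type*}

/-- `classCount sd s σ` is the cumulative multiplicity in `σ` of the species in the
≈-equivalence class of `s` (every ≈-class is of this form). -/
def classCount (sd : Setoid S) (s : S) (σ : Multiset S) : ℕ :=
  (σ.filter (sd.r s)).card

/-- The multiset lifting `≈ₗ` of an equivalence relation `≈` on species:
two multisets are related iff they have the same cumulative multiplicity
of every ≈-equivalence class. -/
def mlift (sd : Setoid S) (σ σ' : Multiset S) : Prop :=
  ∀ s : S, classCount sd s σ = classCount sd s σ'

/-- Cumulative multiplicity in `σ` of an ≈-equivalence class given as an
element of the quotient. -/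
def classCountQ (sd : Setoid S) (H : Quotient sd) (σ : Multiset S) : ℕ :=
  (σ.filter (fun x => Quotient.mk sd x = H)).card

/-- The multiset lifting is itself an equivalence relation on multisets. -/
def mliftSetoid (sd : Setoid S) : Setoid (Multiset S) :=
  ⟨mlift sd, ⟨fun _ _ => rfl, fun h s => (h s).symm, fun h1 h2 s => (h1 s).trans (h2 s)⟩⟩

/-- The set of reagent multisets of a reaction network. -/
def Reags (R : Finset (Reaction S)) : Finset (Multiset S) := R.image Reaction.reag

/-- The set of product multisets of a reaction network. -/
def Prods (R : Finset (Reaction S)) : Finset (Multiset S) := R.image Reaction.prod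

/-- Sum of the kinetic parameters of all reactions with reagents `ρ` and products `π`. -/
def rrOff (R : Finset (Reaction S)) (ρ π : Multiset S) : ℝ :=
  ∑ x ∈ R.filter (fun x => x.reag = ρ ∧ x.prod = π), x.rate

/-- The reaction rate `rr(ρ,π)`: the sum of the kinetic parameters of the reactions from
`ρ` to `π` when `ρ ≠ π`, with diagonal correction `rr(ρ,ρ) = -∑_{π' ∈ Prod(R), π' ≠ ρ} rr(ρ,π')`. -/
def rr (R : Finset (Reaction S)) (ρ π : Multiset S) : ℝ :=
  if ρ = π then -∑ π' ∈ (Prods R).erase ρ, rrOff R ρ π'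
  else rrOff R ρ π

/-- Cumulative reaction rate `rr[ρ,B] = ∑_{π ∈ B ∩ (Prod(R) ∪ {ρ})} rr(ρ,π)`. -/
def rrSet (R : Finset (Reaction S)) (ρ : Multiset S) (B : Set (Multiset S)) : ℝ :=
  ∑ π ∈ (insert ρ (Prods R)).filter (· ∈ B), rr R ρ π

/-- Mass-action propensity of a reaction in state `σ`. -/
def propensity (σ : Multiset S) (x : Reaction S) : ℝ :=
  x.rate * ∏ s ∈ x.reag.toFinset, ((σ.count s).choose (x.reag.count s) : ℝ)

/-- Sum of the propensities in `σ` of all reactions leading from state `σ` to state `θ`. -/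
def qOff (R : Finset (Reaction S)) (σ θ : Multiset S) : ℝ :=
  ∑ x ∈ R.filter (fun x => x.reag ≤ σ ∧ σ - x.reag + x.prod = θ), propensity σ x

/-- The (finitely many) states reachable from `σ` in one reaction. -/
def succs (R : Finset (Reaction S)) (σ : Multiset S) : Finset (Multiset S) :=
  (R.filter (fun x => x.reag ≤ σ)).image (fun x => σ - x.reag + x.prod)

/-- CTMC transition rate `q(σ,θ)` of the Markov chain of the network, with the
convention `q(σ,σ) = -∑_{θ ≠ σ} q(σ,θ)`. -/
def q (R : Finset (Reaction S)) (σ θ : Multiset S) : ℝ :=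
  if σ = θ then -∑ θ' ∈ (succs R σ).erase σ, qOff R σ θ'
  else qOff R σ θ

/-- Aggregate transition rate `q[σ,B] = ∑_{θ ∈ B} q(σ,θ)` (finitely many nonzero terms). -/
def qSet (R : Finset (Reaction S)) (σ : Multiset S) (B : Set (Multiset S)) : ℝ :=
  ∑ θ ∈ (insert σ (succs R σ)).filter (· ∈ B), q R σ θ

/-- All kinetic parameters of the network are positive. -/
def posRates (R : Finset (Reaction S)) : Prop := ∀ x ∈ R, 0 < x.rate

/-- Species equivalence (SE): for all related species `s ≈ s'`, every context `ρ` with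
`s+ρ` or `s'+ρ` a reagent multiset of `R`, and every ≈ₗ-class containing at least one
product multiset (represented by `π₀ ∈ Prod(R)`), the cumulative reaction rates agree. -/
def isSE (sd : Setoid S) (R : Finset (Reaction S)) : Prop :=
  ∀ s s' : S, sd.r s s' → ∀ ρ : Multiset S,
    ((s ::ₘ ρ) ∈ Reags R ∨ (s' ::ₘ ρ) ∈ Reags R) →
    ∀ π₀ ∈ Prods R,
      rrSet R (s ::ₘ ρ) {π | mlift sd π₀ π} = rrSet R (s' ::ₘ ρ) {π | mlift sd π₀ π}

/-- `f` is a representative map for the equivalence `sd`. -/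
def IsRep (sd : Setoid S) (f : S → S) : Prop :=
  (∀ s : S, sd.r (f s) s) ∧ ∀ s s' : S, sd.r s s' → f s = f s'

/-- The reduced reaction network of `R` by the representative map `f`: one reaction
`(ρ̂, β, π̂)` for each pair `(ρ̂, π̂)` with `ρ̂ ∈ Reag(R)`, `f(ρ̂) = ρ̂`, `f(π̂) = π̂` and
`β = ∑ { α | (ρ̂,α,π) ∈ R, f(π) = π̂ }` positive. -/
def reduced (R : Finset (Reaction S)) (f : S → S) : Finset (Reaction S) :=
  ((((R.image (fun x => (x.reag, x.prod.map f))).filter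
      (fun p => p.1.map f = p.1)).image
    (fun p => (⟨p.1, ∑ x ∈ R.filter (fun x => x.reag = p.1 ∧ x.prod.map f = p.2), x.rate,
      p.2⟩ : Reaction S)))).filter (fun x => 0 < x.rate)

/-- SMB-reaction rate: sum of parameters with no diagonal correction. -/
def rrSMBSet (R : Finset (Reaction S)) (ρ : Multiset S) (B : Set (Multiset S)) : ℝ :=
  ∑ π ∈ (Prods R).filter (· ∈ B), rrOff R ρ π

/-- Syntactic Markovian bisimulation. -/
def isSMB (sd : Setoid S) (R : Finset (Reaction S)) : Prop :=
  ∀ s s' : S, sd.r s s' → ∀ ρ π₀ : Multiset S,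
    rrSMBSet R (s ::ₘ ρ) {π | mlift sd π₀ π} = rrSMBSet R (s' ::ₘ ρ) {π | mlift sd π₀ π}


/-! ### Auxiliary lemmas -/

section AuxCC

variable (sd : Setoid S)

lemma classCount_cons (t a : S) (σ : Multiset S) :
    classCount sd t (a ::ₘ σ) = classCount sd t σ + (if sd.r t a then 1 else 0) := by
  classical
  simp only [classCount, Multiset.filter_cons]
  split_ifs <;> simp [add_comm]

lemma classCount_add (t : S) (σ ρ : Multiset S) :
    classCount sd t (σ + ρ) = classCount sd t σ + classCount sd t ρ := by
  simp [classCount, Multiset.filter_add]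

lemma classCount_mono (t : S) {ρ σ : Multiset S} (h : ρ ≤ σ) :
    classCount sd t ρ ≤ classCount sd t σ :=
  Multiset.card_le_card (Multiset.filter_le_filter _ h)

lemma classCount_sub (t : S) {ρ σ : Multiset S} (h : ρ ≤ σ) :
    classCount sd t (σ - ρ) = classCount sd t σ - classCount sd t ρ := by
  have h1 : σ - ρ + ρ = σ := tsub_add_cancel_of_le h
  have h2 := classCount_add sd t (σ - ρ) ρ
  rw [h1] at h2
  omega

lemma classCount_sub_add (t : S) {ρ σ : Multiset S} (h : ρ ≤ σ) (π : Multiset S) :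
    classCount sd t (σ - ρ + π) = classCount sd t σ - classCount sd t ρ + classCount sd t π := by
  rw [classCount_add, classCount_sub sd t h]

lemma mlift_cons {s s' : S} (hss : sd.r s s') (γ : Multiset S) :
    mlift sd (s ::ₘ γ) (s' ::ₘ γ) := by
  intro t
  rw [classCount_cons, classCount_cons]
  have hiff : sd.r t s ↔ sd.r t s' := ⟨fun h => sd.trans h hss, fun h => sd.trans h (sd.symm hss)⟩
  rw [if_congr hiff rfl rfl]

lemma mlift_cons_cancel {s s' : S} (hss : sd.r s s') {γ γ' : Multiset S}
    (h : mlift sd (s ::ₘ γ) (s' ::ₘ γ')) : mlift sd γ γ' := by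
  intro t
  have h1 := h t
  rw [classCount_cons, classCount_cons] at h1
  have hiff : sd.r t s ↔ sd.r t s' := ⟨fun h => sd.trans h hss, fun h => sd.trans h (sd.symm hss)⟩
  rw [if_congr hiff rfl rfl] at h1
  omega

lemma mlift_zero {σ' : Multiset S} (h : mlift sd 0 σ') : σ' = 0 := by
  by_contra hne
  obtain ⟨t, ht⟩ := Multiset.exists_mem_of_ne_zero hne
  have h1 := h t
  have h2 : t ∈ Multiset.filter (sd.r t) σ' := Multiset.mem_filter.2 ⟨ht, sd.refl t⟩
  have h3 : 0 < (Multiset.filter (sd.r t) σ').card := Multiset.card_pos_iff_exists_mem.2 ⟨t, h2⟩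
  simp [classCount] at h1
  omega

/-- Single species swap between equivalent species. -/
def Swap1 (ρ ρ' : Multiset S) : Prop :=
  ∃ s s' γ, sd.r s s' ∧ ρ = s ::ₘ γ ∧ ρ' = s' ::ₘ γ

lemma swap1_cons {ρ ρ' : Multiset S} (t : S) (h : Swap1 sd ρ ρ') :
    Swap1 sd (t ::ₘ ρ) (t ::ₘ ρ') := by
  obtain ⟨s, s', γ, hss, rfl, rfl⟩ := h
  exact ⟨s, s', t ::ₘ γ, hss, Multiset.cons_swap t s γ, Multiset.cons_swap t s' γ⟩

lemma swap_chain : ∀ (n : ℕ) (σ σ' : Multiset S), σ.card = n → mlift sd σ σ' →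
    Relation.ReflTransGen (Swap1 sd) σ σ'
  | 0, σ, σ', hc, h => by
    have hσ : σ = 0 := Multiset.card_eq_zero.mp hc
    subst hσ
    rw [mlift_zero sd h]
  | (n+1), σ, σ', hc, h => by
    classical
    have hpos : 0 < σ.card := by omega
    obtain ⟨s, hs⟩ := Multiset.card_pos_iff_exists_mem.1 hpos
    have hσ : σ = s ::ₘ σ.erase s := (Multiset.cons_erase hs).symm
    have hcc : 0 < classCount sd s σ' := by
      rw [← h s]
      exact Multiset.card_pos_iff_exists_mem.2 ⟨s, Multiset.mem_filter.2 ⟨hs, sd.refl s⟩⟩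
    obtain ⟨s', hs'mem⟩ := Multiset.card_pos_iff_exists_mem.1 hcc
    rw [Multiset.mem_filter] at hs'mem
    obtain ⟨hs'σ', hss'⟩ := hs'mem
    have hσ' : σ' = s' ::ₘ σ'.erase s' := (Multiset.cons_erase hs'σ').symm
    rw [hσ, hσ'] at h
    have hγ : mlift sd (σ.erase s) (σ'.erase s') := mlift_cons_cancel sd hss' h
    have hcard : (σ.erase s).card = n := by
      have h5 := Multiset.card_erase_of_mem hs
      rw [hc] at h5
      simpa using h5
    have ih := swap_chain n (σ.erase s) (σ'.erase s') hcard hγ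
    have chain2 : Relation.ReflTransGen (Swap1 sd) (s' ::ₘ σ.erase s) (s' ::ₘ σ'.erase s') :=
      Relation.ReflTransGen.lift (fun b => s' ::ₘ b) (fun a b hab => swap1_cons sd s' hab) _ _ ih
    have step1 : Swap1 sd σ (s' ::ₘ σ.erase s) := ⟨s, s', σ.erase s, hss', hσ, rfl⟩
    rw [hσ']
    exact Relation.ReflTransGen.head step1 chain2

end AuxCC

section AuxW

open Classical in
/-- The combinatorial weight `∏_s C(count_σ s, count_ρ s)`. -/
def wN (σ ρ : Multiset S) : ℕ :=
  ∏ s ∈ ρ.toFinset, (σ.count s).choose (ρ.count s)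

lemma propensity_eq (σ : Multiset S) (x : Reaction S) :
    propensity σ x = x.rate * (wN σ x.reag : ℝ) := by
  rw [propensity, wN, Nat.cast_prod]

lemma wN_eq_zero {σ ρ : Multiset S} (h : ¬ ρ ≤ σ) : wN σ ρ = 0 := by
  classical
  rw [Multiset.le_iff_count] at h
  push_neg at h
  obtain ⟨t, ht⟩ := h
  have htρ : t ∈ ρ.toFinset := Multiset.mem_toFinset.2 (Multiset.count_pos.1 (by omega))
  exact Finset.prod_eq_zero htρ (Nat.choose_eq_zero_of_lt ht)

lemma wN_split (σ ρ : Multiset S) (a : S) :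
    wN σ ρ = (σ.count a).choose (ρ.count a) *
      ∏ s ∈ ρ.toFinset.erase a, (σ.count s).choose (ρ.count s) := by
  classical
  by_cases ha : a ∈ ρ.toFinset
  · exact (Finset.mul_prod_erase _ _ ha).symm
  · rw [Finset.erase_eq_of_notMem ha]
    have h0 : ρ.count a = 0 := by
      rwa [Multiset.mem_toFinset, ← Multiset.count_pos, not_lt, Nat.le_zero] at ha
    rw [h0, Nat.choose_zero_right, one_mul, wN]

lemma erase_toFinset_erase (ρ : Multiset S) (a : S) :
    (ρ.erase a).toFinset.erase a = ρ.toFinset.erase a := by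
  classical
  ext s
  simp only [Finset.mem_erase, Multiset.mem_toFinset]
  constructor
  · rintro ⟨hne, hmem⟩
    exact ⟨hne, Multiset.mem_of_mem_erase hmem⟩
  · rintro ⟨hne, hmem⟩
    exact ⟨hne, (Multiset.mem_erase_of_ne hne).2 hmem⟩

lemma wN_cons (γ ρ : Multiset S) (a : S) :
    wN (a ::ₘ γ) ρ = wN γ ρ + (if a ∈ ρ then wN γ (ρ.erase a) else 0) := by
  classical
  by_cases ha : a ∈ ρ
  · rw [if_pos ha]
    obtain ⟨k, hk⟩ : ∃ k, ρ.count a = k + 1 :=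
      ⟨ρ.count a - 1, by have := Multiset.count_pos.2 ha; omega⟩
    have hP : ∀ s ∈ ρ.toFinset.erase a,
        ((a ::ₘ γ).count s).choose (ρ.count s) = (γ.count s).choose (ρ.count s) := by
      intro s hs
      rw [Multiset.count_cons_of_ne (Finset.ne_of_mem_erase hs) γ]
    have hP' : ∀ s ∈ ρ.toFinset.erase a,
        (γ.count s).choose ((ρ.erase a).count s) = (γ.count s).choose (ρ.count s) := by
      intro s hs
      rw [Multiset.count_erase_of_ne (Finset.ne_of_mem_erase hs)]
    rw [wN_split (a ::ₘ γ) ρ a, wN_split γ ρ a, wN_split γ (ρ.erase a) a,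
      Finset.prod_congr rfl hP, erase_toFinset_erase, Finset.prod_congr rfl hP',
      Multiset.count_cons_self, Multiset.count_erase_self, hk]
    have hch : (γ.count a + 1).choose (k + 1) =
        (γ.count a).choose (k + 1) + (γ.count a).choose k := by
      rw [Nat.choose_succ_succ']; omega
    rw [hch]
    simp [Nat.add_mul]
  · rw [if_neg ha, add_zero]
    have h0 : ρ.count a = 0 := by rwa [← Multiset.count_eq_zero] at ha
    apply Finset.prod_congr rfl
    intro s hs
    have hne : s ≠ a := by
      rintro rfl
      exact ha (Multiset.mem_toFinset.1 hs)
    rw [Multiset.count_cons_of_ne hne]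

end AuxW

section AuxRR

variable (R : Finset (Reaction S))

/-- Total exit rate from a reagent multiset. -/
def TT (ρ : Multiset S) : ℝ := ∑ π ∈ Prods R, rrOff R ρ π

lemma rrOff_eq_zero_of_not_reag {ρ : Multiset S} (h : ρ ∉ Reags R) (π : Multiset S) :
    rrOff R ρ π = 0 := by
  classical
  rw [rrOff, Finset.filter_false_of_mem, Finset.sum_empty]
  rintro x hx ⟨h1, h2⟩
  exact h (h1 ▸ Finset.mem_image_of_mem Reaction.reag hx)

lemma rrOff_diag_eq_zero_of_not_prod {ρ : Multiset S} (h : ρ ∉ Prods R) :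
    rrOff R ρ ρ = 0 := by
  classical
  rw [rrOff, Finset.filter_false_of_mem, Finset.sum_empty]
  rintro x hx ⟨h1, h2⟩
  exact h (h2 ▸ Finset.mem_image_of_mem Reaction.prod hx)

lemma rr_diag (ρ : Multiset S) : rr R ρ ρ = rrOff R ρ ρ - TT R ρ := by
  classical
  rw [rr, if_pos rfl, TT]
  by_cases h : ρ ∈ Prods R
  · rw [Finset.sum_erase_eq_sub h]; ring
  · rw [Finset.erase_eq_of_notMem h, rrOff_diag_eq_zero_of_not_prod R h]; ring

lemma TT_eq_zero_of_not_reag {ρ : Multiset S} (h : ρ ∉ Reags R) : TT R ρ = 0 :=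
  Finset.sum_eq_zero fun π _ => rrOff_eq_zero_of_not_reag R h π

lemma rrSet_eq (ρ : Multiset S) (B : Set (Multiset S)) :
    rrSet R ρ B = rrSMBSet R ρ B - (if ρ ∈ B then TT R ρ else 0) := by
  classical
  rw [rrSet, rrSMBSet]
  by_cases hB : ρ ∈ B
  · rw [if_pos hB]
    by_cases hP : ρ ∈ Prods R
    · have hins : insert ρ (Prods R) = Prods R := Finset.insert_eq_self.2 hP
      rw [hins]
      have hmem : ρ ∈ (Prods R).filter (· ∈ B) := Finset.mem_filter.2 ⟨hP, hB⟩
      rw [← Finset.add_sum_erase _ _ hmem, ← Finset.add_sum_erase _ _ hmem, rr_diag]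
      have hoff : ∀ π ∈ ((Prods R).filter (· ∈ B)).erase ρ, rr R ρ π = rrOff R ρ π := by
        intro π hπ
        rw [rr, if_neg (Ne.symm (Finset.ne_of_mem_erase hπ))]
      rw [Finset.sum_congr rfl hoff]; ring
    · rw [Finset.filter_insert, if_pos hB]
      have hρ : ρ ∉ (Prods R).filter (· ∈ B) := fun hc => hP (Finset.mem_filter.1 hc).1
      rw [Finset.sum_insert hρ, rr_diag, rrOff_diag_eq_zero_of_not_prod R hP]
      have hoff : ∀ π ∈ (Prods R).filter (· ∈ B), rr R ρ π = rrOff R ρ π := by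
        intro π hπ
        rw [rr, if_neg]
        rintro rfl
        exact hP (Finset.mem_filter.1 hπ).1
      rw [Finset.sum_congr rfl hoff]; ring
  · rw [if_neg hB, Finset.filter_insert, if_neg hB, sub_zero]
    apply Finset.sum_congr rfl
    intro π hπ
    rw [rr, if_neg]
    rintro rfl
    exact hB (Finset.mem_filter.1 hπ).2

lemma rrSet_of_not_reag {ρ : Multiset S} (h : ρ ∉ Reags R) (B : Set (Multiset S)) :
    rrSet R ρ B = 0 := by
  rw [rrSet]
  apply Finset.sum_eq_zero
  intro π hπ
  rw [rr]
  split
  · rw [neg_eq_zero]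
    exact Finset.sum_eq_zero fun π' _ => rrOff_eq_zero_of_not_reag R h π'
  · exact rrOff_eq_zero_of_not_reag R h π

end AuxRR

section AuxSE

variable (sd : Setoid S) (R : Finset (Reaction S))

lemma filter_mem_setOf (P : Multiset S → Prop) (s : Finset (Multiset S)) :
    s.filter (· ∈ {x | P x}) = s.filter P := by
  simp only [Set.mem_setOf_eq]

lemma rrSet_swap (hse : isSE sd R) {s s' : S} (hss : sd.r s s') (γ τ : Multiset S) :
    rrSet R (s ::ₘ γ) {π | mlift sd π τ} = rrSet R (s' ::ₘ γ) {π | mlift sd π τ} := by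
  classical
  have hρρ' : mlift sd (s ::ₘ γ) (s' ::ₘ γ) := mlift_cons sd hss γ
  by_cases hre : (s ::ₘ γ) ∈ Reags R ∨ (s' ::ₘ γ) ∈ Reags R
  · by_cases hτ : ∃ π₀ ∈ Prods R, mlift sd π₀ τ
    · obtain ⟨π₀, hπ₀, hmt⟩ := hτ
      have hBeq : {π | mlift sd π τ} = {π | mlift sd π₀ π} := by
        ext π
        simp only [Set.mem_setOf_eq]
        exact ⟨fun h t => (hmt t).trans (h t).symm, fun h t => (h t).symm.trans (hmt t)⟩
      rw [hBeq]
      exact hse s s' hss γ hre π₀ hπ₀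
    · push_neg at hτ
      by_cases hρτ : mlift sd (s ::ₘ γ) τ
      · -- both states are in the class of τ, which contains no product
        have hρ'τ : mlift sd (s' ::ₘ γ) τ := fun t => (hρρ' t).symm.trans (hρτ t)
        have hfib : ∀ μ : Multiset S,
            TT R μ = ∑ c ∈ (Prods R).image (Quotient.mk (mliftSetoid sd)),
              ∑ π ∈ (Prods R).filter (fun π => Quotient.mk (mliftSetoid sd) π = c),
                rrOff R μ π := by
          intro μ
          rw [TT]
          exact (Finset.sum_fiberwise_of_maps_to
            (fun x hx => Finset.mem_image_of_mem _ hx) _).symm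
        have hclass : ∀ μ : Multiset S, mlift sd μ τ →
            TT R μ = ∑ c ∈ (Prods R).image (Quotient.mk (mliftSetoid sd)),
              rrSet R μ {π | Quotient.mk (mliftSetoid sd) π = c} := by
          intro μ hμ
          rw [hfib μ]
          apply Finset.sum_congr rfl
          intro c hc
          obtain ⟨π₀, hπ₀, rfl⟩ := Finset.mem_image.1 hc
          have hμc : μ ∉ {π | Quotient.mk (mliftSetoid sd) π = Quotient.mk (mliftSetoid sd) π₀} := by
            intro hmem
            have h1 : mlift sd μ π₀ := Quotient.exact hmem
            exact hτ π₀ hπ₀ (fun t => (h1 t).symm.trans (hμ t))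
          rw [rrSet_eq, if_neg hμc, sub_zero, rrSMBSet, Finset.sum_filter, Finset.sum_filter]
          apply Finset.sum_congr rfl
          intro x hx
          by_cases hx2 : Quotient.mk (mliftSetoid sd) x = Quotient.mk (mliftSetoid sd) π₀
          · rw [if_pos hx2, if_pos (show x ∈ {π | Quotient.mk (mliftSetoid sd) π
              = Quotient.mk (mliftSetoid sd) π₀} from hx2)]
          · rw [if_neg hx2, if_neg (show ¬ x ∈ {π | Quotient.mk (mliftSetoid sd) π
              = Quotient.mk (mliftSetoid sd) π₀} from hx2)]
        have hTTeq : TT R (s ::ₘ γ) = TT R (s' ::ₘ γ) := by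
          rw [hclass _ hρτ, hclass _ hρ'τ]
          apply Finset.sum_congr rfl
          intro c hc
          obtain ⟨π₀, hπ₀, rfl⟩ := Finset.mem_image.1 hc
          have hset : {π | Quotient.mk (mliftSetoid sd) π = Quotient.mk (mliftSetoid sd) π₀}
              = {π | mlift sd π₀ π} := by
            ext π
            simp only [Set.mem_setOf_eq]
            constructor
            · intro hmk
              have h1 : mlift sd π π₀ := Quotient.exact hmk
              exact fun t => (h1 t).symm
            · intro h1
              exact Quotient.sound (fun t => (h1 t).symm)
          rw [hset]
          exact hse s s' hss γ hre π₀ hπ₀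
        have key : ∀ μ : Multiset S, mlift sd μ τ →
            rrSet R μ {π | mlift sd π τ} = - TT R μ := by
          intro μ hμ
          have hμP : μ ∉ Prods R := fun hc => hτ μ hc hμ
          have hfil : (insert μ (Prods R)).filter (· ∈ {π | mlift sd π τ}) = {μ} := by
            rw [Finset.filter_insert, if_pos (show μ ∈ {π | mlift sd π τ} from hμ), filter_mem_setOf (fun π => mlift sd π τ), Finset.filter_false_of_mem (fun π hπ hc => hτ π hπ hc)]
            simp
          rw [rrSet, hfil, Finset.sum_singleton, rr_diag,
            rrOff_diag_eq_zero_of_not_prod R hμP, zero_sub]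
        rw [key _ hρτ, key _ hρ'τ, hTTeq]
      · have hρ'τ : ¬ mlift sd (s' ::ₘ γ) τ := fun hc => hρτ (fun t => (hρρ' t).trans (hc t))
        have key0 : ∀ μ : Multiset S, ¬ mlift sd μ τ →
            rrSet R μ {π | mlift sd π τ} = 0 := by
          intro μ hμ
          rw [rrSet, filter_mem_setOf (fun π => mlift sd π τ), Finset.filter_false_of_mem,
            Finset.sum_empty]
          intro π hπ hc
          rcases Finset.mem_insert.1 hπ with rfl | hπ'
          · exact hμ hc
          · exact hτ π hπ' hc
        rw [key0 _ hρτ, key0 _ hρ'τ]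
  · push_neg at hre
    rw [rrSet_of_not_reag R hre.1, rrSet_of_not_reag R hre.2]

lemma rrSet_mlift (hse : isSE sd R) {ρ ρ' : Multiset S} (h : mlift sd ρ ρ') (τ : Multiset S) :
    rrSet R ρ {π | mlift sd π τ} = rrSet R ρ' {π | mlift sd π τ} := by
  have hchain := swap_chain sd ρ.card ρ ρ' rfl h
  clear h
  induction hchain with
  | refl => rfl
  | tail hab hbc ih =>
    obtain ⟨t, t', μ, htt, rfl, rfl⟩ := hbc
    exact ih.trans (rrSet_swap sd R hse htt μ τ)

lemma rrSet_mlift_class (hse : isSE sd R) {ρ ρ' : Multiset S} (h : mlift sd ρ ρ')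
    {B : Set (Multiset S)} (hB : B = ∅ ∨ ∃ τ, B = {π | mlift sd π τ}) :
    rrSet R ρ B = rrSet R ρ' B := by
  classical
  rcases hB with rfl | ⟨τ, rfl⟩
  · rw [rrSet, rrSet, Finset.sum_filter, Finset.sum_filter]
    simp
  · exact rrSet_mlift sd R hse h τ

end AuxSE

section AuxQ

variable (R : Finset (Reaction S))

lemma qOff_eq_zero_of_not_succs {σ θ : Multiset S} (h : θ ∉ succs R σ) : qOff R σ θ = 0 := by
  classical
  rw [qOff, Finset.filter_false_of_mem, Finset.sum_empty]
  rintro x hx ⟨h1, h2⟩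
  exact h (Finset.mem_image.2 ⟨x, Finset.mem_filter.2 ⟨hx, h1⟩, h2⟩)

lemma q_diag (σ : Multiset S) :
    q R σ σ = qOff R σ σ - ∑ θ ∈ succs R σ, qOff R σ θ := by
  classical
  rw [q, if_pos rfl]
  by_cases h : σ ∈ succs R σ
  · rw [Finset.sum_erase_eq_sub h]; ring
  · rw [Finset.erase_eq_of_notMem h, qOff_eq_zero_of_not_succs R h]; ring

lemma qSet_eq (σ : Multiset S) (B : Set (Multiset S)) :
    qSet R σ B = (∑ θ ∈ (succs R σ).filter (· ∈ B), qOff R σ θ)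
      - (if σ ∈ B then ∑ θ ∈ succs R σ, qOff R σ θ else 0) := by
  classical
  rw [qSet]
  by_cases hB : σ ∈ B
  · rw [if_pos hB]
    by_cases hP : σ ∈ succs R σ
    · have hins : insert σ (succs R σ) = succs R σ := Finset.insert_eq_self.2 hP
      rw [hins]
      have hmem : σ ∈ (succs R σ).filter (· ∈ B) := Finset.mem_filter.2 ⟨hP, hB⟩
      rw [← Finset.add_sum_erase _ _ hmem, ← Finset.add_sum_erase _ _ hmem, q_diag]
      have hoff : ∀ θ ∈ ((succs R σ).filter (· ∈ B)).erase σ, q R σ θ = qOff R σ θ := by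
        intro θ hθ
        rw [q, if_neg (Ne.symm (Finset.ne_of_mem_erase hθ))]
      rw [Finset.sum_congr rfl hoff]; ring
    · rw [Finset.filter_insert, if_pos hB]
      have hσ : σ ∉ (succs R σ).filter (· ∈ B) := fun hc => hP (Finset.mem_filter.1 hc).1
      rw [Finset.sum_insert hσ, q_diag, qOff_eq_zero_of_not_succs R hP]
      have hoff : ∀ θ ∈ (succs R σ).filter (· ∈ B), q R σ θ = qOff R σ θ := by
        intro θ hθ
        rw [q, if_neg]
        rintro rfl
        exact hP (Finset.mem_filter.1 hθ).1
      rw [Finset.sum_congr rfl hoff]; ring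
  · rw [if_neg hB, Finset.filter_insert, if_neg hB, sub_zero]
    apply Finset.sum_congr rfl
    intro θ hθ
    rw [q, if_neg]
    rintro rfl
    exact hB (Finset.mem_filter.1 hθ).2

lemma sum_qOff (σ : Multiset S) (B : Set (Multiset S)) :
    ∑ θ ∈ (succs R σ).filter (· ∈ B), qOff R σ θ
      = ∑ x ∈ R.filter (fun x => x.reag ≤ σ ∧ σ - x.reag + x.prod ∈ B), propensity σ x := by
  classical
  rw [← Finset.sum_fiberwise_of_maps_to (g := fun x : Reaction S => σ - x.reag + x.prod)
    (t := (succs R σ).filter (· ∈ B)) ?hmaps (propensity σ)]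
  case hmaps =>
    intro x hx
    have hx' := Finset.mem_filter.1 hx
    exact Finset.mem_filter.2
      ⟨Finset.mem_image.2 ⟨x, Finset.mem_filter.2 ⟨hx'.1, hx'.2.1⟩, rfl⟩, hx'.2.2⟩
  apply Finset.sum_congr rfl
  intro θ hθ
  rw [qOff]
  apply Finset.sum_congr _ (fun _ _ => rfl)
  ext x
  simp only [Finset.mem_filter]
  constructor
  · rintro ⟨hxR, h1, h2⟩
    exact ⟨⟨hxR, h1, h2 ▸ (Finset.mem_filter.1 hθ).2⟩, h2⟩
  · rintro ⟨⟨hxR, h1, _⟩, h2⟩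
    exact ⟨hxR, h1, h2⟩

lemma sum_prop (σ : Multiset S) (B : Set (Multiset S)) :
    ∑ x ∈ R.filter (fun x => x.reag ≤ σ ∧ σ - x.reag + x.prod ∈ B), propensity σ x
      = ∑ ρ ∈ (Reags R).filter (· ≤ σ), (wN σ ρ : ℝ) * rrSMBSet R ρ {π | σ - ρ + π ∈ B} := by
  classical
  rw [← Finset.sum_fiberwise_of_maps_to (g := Reaction.reag)
    (t := (Reags R).filter (· ≤ σ)) ?hmaps (propensity σ)]
  case hmaps =>
    intro x hx
    have hx' := Finset.mem_filter.1 hx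
    exact Finset.mem_filter.2 ⟨Finset.mem_image_of_mem _ hx'.1, hx'.2.1⟩
  apply Finset.sum_congr rfl
  intro ρ hρ
  have hρ' := Finset.mem_filter.1 hρ
  have hinner : ∀ x ∈ (R.filter (fun x => x.reag ≤ σ ∧ σ - x.reag + x.prod ∈ B)).filter
      (fun x => x.reag = ρ), propensity σ x = x.rate * (wN σ ρ : ℝ) := by
    intro x hx
    have h2 := (Finset.mem_filter.1 hx).2
    rw [propensity_eq, h2]
  rw [Finset.sum_congr rfl hinner, ← Finset.sum_mul, mul_comm]
  congr 1
  rw [rrSMBSet]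
  rw [← Finset.sum_fiberwise_of_maps_to (g := Reaction.prod)
    (t := (Prods R).filter (· ∈ {π | σ - ρ + π ∈ B})) ?hmaps2 Reaction.rate]
  case hmaps2 =>
    intro x hx
    have hx' := Finset.mem_filter.1 hx
    have hx'' := Finset.mem_filter.1 hx'.1
    refine Finset.mem_filter.2 ⟨Finset.mem_image_of_mem _ hx''.1, ?_⟩
    show σ - ρ + x.prod ∈ B
    rw [← hx'.2]
    exact hx''.2.2
  apply Finset.sum_congr rfl
  intro π hπ
  have hπ' := Finset.mem_filter.1 hπ
  rw [rrOff]
  apply Finset.sum_congr _ (fun _ _ => rfl)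
  ext x
  simp only [Finset.mem_filter]
  constructor
  · rintro ⟨⟨⟨hxR, _, _⟩, hreag⟩, hprod⟩
    exact ⟨hxR, hreag, hprod⟩
  · rintro ⟨hxR, hreag, hprod⟩
    refine ⟨⟨⟨hxR, ?_, ?_⟩, hreag⟩, hprod⟩
    · rw [hreag]; exact hρ'.2
    · rw [hreag]
      show σ - ρ + x.prod ∈ B
      rw [hprod]
      exact hπ'.2
  -- note: fiber membership shape is ((x ∈ R ∧ (reag ≤ σ ∧ target ∈ B)) ∧ reag = ρ) ∧ prod = π

lemma qSet_decomp (σ : Multiset S) (B : Set (Multiset S)) :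
    qSet R σ B = ∑ ρ ∈ (Reags R).filter (· ≤ σ),
      (wN σ ρ : ℝ) * rrSet R ρ {π | σ - ρ + π ∈ B} := by
  classical
  rw [qSet_eq, sum_qOff, sum_prop]
  have htot : (∑ θ ∈ succs R σ, qOff R σ θ)
      = ∑ ρ ∈ (Reags R).filter (· ≤ σ), (wN σ ρ : ℝ) * TT R ρ := by
    have h2 := sum_qOff R σ Set.univ
    have h4 : ∀ B : Set (Multiset S), (∀ x, x ∈ B) →
        ((succs R σ).filter (· ∈ B)) = succs R σ :=
      fun B hB => Finset.filter_true_of_mem (fun x _ => hB x)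
    have h5 : ∀ B : Set (Multiset S), (∀ x, x ∈ B) →
        ((Prods R).filter (· ∈ B)) = Prods R :=
      fun B hB => Finset.filter_true_of_mem (fun x _ => hB x)
    rw [h4 Set.univ (fun _ => trivial)] at h2
    rw [h2, sum_prop R σ Set.univ]
    apply Finset.sum_congr rfl
    intro ρ hρ
    congr 1
    rw [rrSMBSet, TT, h5 {π | σ - ρ + π ∈ Set.univ} (fun _ => trivial)]
  rw [htot]
  have hif : (if σ ∈ B then ∑ ρ ∈ (Reags R).filter (· ≤ σ), (wN σ ρ : ℝ) * TT R ρ else 0)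
      = ∑ ρ ∈ (Reags R).filter (· ≤ σ), (if σ ∈ B then (wN σ ρ : ℝ) * TT R ρ else 0) := by
    split_ifs with h
    · rfl
    · rw [Finset.sum_const_zero]
  rw [hif, ← Finset.sum_sub_distrib]
  apply Finset.sum_congr rfl
  intro ρ hρ
  have hle : ρ ≤ σ := (Finset.mem_filter.1 hρ).2
  have hmem : ρ ∈ {π | σ - ρ + π ∈ B} ↔ σ ∈ B := by
    simp only [Set.mem_setOf_eq, tsub_add_cancel_of_le hle]
  rw [rrSet_eq, mul_sub]
  congr 1
  by_cases hσB : σ ∈ B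
  · rw [if_pos hσB, if_pos (hmem.2 hσB)]
  · rw [if_neg hσB, if_neg (fun hc => hσB (hmem.1 hc)), mul_zero]

lemma qSet_decomp_class (sd : Setoid S) (σ τ : Multiset S) :
    qSet R σ {θ | mlift sd θ τ} = ∑ ρ ∈ σ.powerset.toFinset, (wN σ ρ : ℝ) *
      rrSet R ρ {π | ∀ t, classCount sd t σ + classCount sd t π
        = classCount sd t τ + classCount sd t ρ} := by
  classical
  rw [qSet_decomp]
  have hcong : ∀ ρ ∈ (Reags R).filter (· ≤ σ),
      (wN σ ρ : ℝ) * rrSet R ρ {π | σ - ρ + π ∈ {θ | mlift sd θ τ}}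
      = (wN σ ρ : ℝ) * rrSet R ρ {π | ∀ t, classCount sd t σ + classCount sd t π
          = classCount sd t τ + classCount sd t ρ} := by
    intro ρ hρ
    have hle : ρ ≤ σ := (Finset.mem_filter.1 hρ).2
    congr 2
    ext π
    simp only [Set.mem_setOf_eq]
    constructor
    · intro h t
      have h1 := h t
      rw [classCount_sub_add sd t hle] at h1
      have h2 := classCount_mono sd t hle
      omega
    · intro h t
      rw [classCount_sub_add sd t hle]
      have h1 := h t
      have h2 := classCount_mono sd t hle
      omega
  rw [Finset.sum_congr rfl hcong]
  apply Finset.sum_subset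
  · intro ρ hρ
    rw [Multiset.mem_toFinset, Multiset.mem_powerset]
    exact (Finset.mem_filter.1 hρ).2
  · intro ρ hρ hne
    have hρσ : ρ ≤ σ := Multiset.mem_powerset.1 (Multiset.mem_toFinset.1 hρ)
    have hnotin : ρ ∉ Reags R := fun hc => hne (Finset.mem_filter.2 ⟨hc, hρσ⟩)
    rw [rrSet_of_not_reag R hnotin, mul_zero]

end AuxQ

section AuxMain

variable (sd : Setoid S)

lemma sum_cons_key (F : Multiset S → ℝ) (γ : Multiset S) (t : S) :
    ∑ ρ ∈ (t ::ₘ γ).powerset.toFinset, (wN (t ::ₘ γ) ρ : ℝ) * F ρ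
      = ∑ ρ ∈ γ.powerset.toFinset, ((wN γ ρ : ℝ) * F ρ + (wN γ ρ : ℝ) * F (t ::ₘ ρ)) := by
  classical
  have h1 : ∀ ρ ∈ (t ::ₘ γ).powerset.toFinset,
      (wN (t ::ₘ γ) ρ : ℝ) * F ρ
        = (wN γ ρ : ℝ) * F ρ + (if t ∈ ρ then (wN γ (ρ.erase t) : ℝ) * F ρ else 0) := by
    intro ρ hρ
    rw [wN_cons]
    split_ifs with h
    · push_cast; ring
    · push_cast; ring
  rw [Finset.sum_congr rfl h1, Finset.sum_add_distrib, Finset.sum_add_distrib]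
  congr 1
  · symm
    apply Finset.sum_subset
    · intro ρ hρ
      rw [Multiset.mem_toFinset, Multiset.mem_powerset] at hρ ⊢
      exact hρ.trans (Multiset.le_cons_self γ t)
    · intro ρ hρ hne
      rw [Multiset.mem_toFinset, Multiset.mem_powerset] at hne
      rw [wN_eq_zero hne, Nat.cast_zero, zero_mul]
  · rw [← Finset.sum_filter]
    apply Finset.sum_nbij' (i := fun ρ => ρ.erase t) (j := fun μ => t ::ₘ μ)
    · intro ρ hρ
      have h2 := Finset.mem_filter.1 hρ
      have h3 : ρ ≤ t ::ₘ γ := Multiset.mem_powerset.1 (Multiset.mem_toFinset.1 h2.1)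
      have h4 : ρ.erase t ≤ (t ::ₘ γ).erase t := Multiset.erase_le_erase t h3
      rw [Multiset.erase_cons_head] at h4
      rw [Multiset.mem_toFinset, Multiset.mem_powerset]
      exact h4
    · intro μ hμ
      have h3 : μ ≤ γ := Multiset.mem_powerset.1 (Multiset.mem_toFinset.1 hμ)
      refine Finset.mem_filter.2 ⟨?_, Multiset.mem_cons_self t μ⟩
      rw [Multiset.mem_toFinset, Multiset.mem_powerset]
      exact Multiset.cons_le_cons t h3
    · intro ρ hρ
      exact Multiset.cons_erase (Finset.mem_filter.1 hρ).2
    · intro μ hμ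
      exact Multiset.erase_cons_head t μ
    · intro ρ hρ
      rw [Multiset.cons_erase (Finset.mem_filter.1 hρ).2]

lemma sum_swap_inv (F : Multiset S → ℝ) (hF : ∀ ρ ρ', mlift sd ρ ρ' → F ρ = F ρ')
    {σ σ' : Multiset S} (h : mlift sd σ σ') :
    ∑ ρ ∈ σ.powerset.toFinset, (wN σ ρ : ℝ) * F ρ
      = ∑ ρ ∈ σ'.powerset.toFinset, (wN σ' ρ : ℝ) * F ρ := by
  have hchain := swap_chain sd σ.card σ σ' rfl h
  clear h
  induction hchain with
  | refl => rfl
  | tail hab hbc ih =>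
    obtain ⟨t, t', μ, htt, rfl, rfl⟩ := hbc
    refine ih.trans ?_
    rw [sum_cons_key F μ t, sum_cons_key F μ t']
    apply Finset.sum_congr rfl
    intro ρ hρ
    rw [hF (t ::ₘ ρ) (t' ::ₘ ρ) (mlift_cons sd htt ρ)]

end AuxMain

/-- sufficiency of SE for ordinary lumpability: if `sd` is a species
equivalence for `R` then its multiset lifting is an ordinarily lumpable partition of the
CTMC of `R` on the full state space. -/
theorem isSE_implies_lumpable (sd : Setoid S) (R : Finset (Reaction S)) (hpos : posRates R)
    (hse : isSE sd R) :
    ∀ σ σ' τ : Multiset S, mlift sd σ σ' →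
      qSet R σ {θ | mlift sd θ τ} = qSet R σ' {θ | mlift sd θ τ} := by
  intro σ σ' τ hσσ'
  classical
  have hF : ∀ ρ ρ', mlift sd ρ ρ' →
      rrSet R ρ {π | ∀ t, classCount sd t σ + classCount sd t π
        = classCount sd t τ + classCount sd t ρ}
      = rrSet R ρ' {π | ∀ t, classCount sd t σ + classCount sd t π
        = classCount sd t τ + classCount sd t ρ'} := by
    intro ρ ρ' h
    have hset : {π | ∀ t, classCount sd t σ + classCount sd t π
          = classCount sd t τ + classCount sd t ρ}
        = {π | ∀ t, classCount sd t σ + classCount sd t π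
          = classCount sd t τ + classCount sd t ρ'} := by
      ext π
      simp only [Set.mem_setOf_eq]
      constructor <;> intro hh t <;> have h1 := h t <;> have h2 := hh t <;> omega
    rw [hset]
    apply rrSet_mlift_class sd R hse h
    by_cases hne : ∃ π₁, π₁ ∈ {π | ∀ t, classCount sd t σ + classCount sd t π
        = classCount sd t τ + classCount sd t ρ'}
    · obtain ⟨π₁, hπ₁⟩ := hne
      right
      refine ⟨π₁, ?_⟩
      ext π
      simp only [Set.mem_setOf_eq] at hπ₁ ⊢
      show _ ↔ mlift sd π π₁
      unfold mlift
      constructor <;> intro hh t <;> have h1 := hπ₁ t <;> have h2 := hh t <;> omega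
    · left
      exact Set.eq_empty_iff_forall_notMem.2 (fun π hπ => hne ⟨π, hπ⟩)
  have hrepl : ∀ ρ : Multiset S, {π | ∀ t, classCount sd t σ' + classCount sd t π
        = classCount sd t τ + classCount sd t ρ}
      = {π | ∀ t, classCount sd t σ + classCount sd t π
        = classCount sd t τ + classCount sd t ρ} := by
    intro ρ
    ext π
    simp only [Set.mem_setOf_eq]
    constructor <;> intro hh t <;> have h1 := hσσ' t <;> have h2 := hh t <;> omega
  calc qSet R σ {θ | mlift sd θ τ}
      = ∑ ρ ∈ σ.powerset.toFinset, (wN σ ρ : ℝ) *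
          rrSet R ρ {π | ∀ t, classCount sd t σ + classCount sd t π
            = classCount sd t τ + classCount sd t ρ} := qSet_decomp_class R sd σ τ
    _ = ∑ ρ ∈ σ'.powerset.toFinset, (wN σ' ρ : ℝ) *
          rrSet R ρ {π | ∀ t, classCount sd t σ + classCount sd t π
            = classCount sd t τ + classCount sd t ρ} :=
        sum_swap_inv sd (fun ρ => rrSet R ρ {π | ∀ t, classCount sd t σ + classCount sd t π
            = classCount sd t τ + classCount sd t ρ}) hF hσσ'
    _ = ∑ ρ ∈ σ'.powerset.toFinset, (wN σ' ρ : ℝ) *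
          rrSet R ρ {π | ∀ t, classCount sd t σ' + classCount sd t π
            = classCount sd t τ + classCount sd t ρ} :=
        Finset.sum_congr rfl (fun ρ _ => by rw [hrepl ρ])
    _ = qSet R σ' {θ | mlift sd θ τ} := (qSet_decomp_class R sd σ' τ).symm


end
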